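/- arXiv:1707.04310 — 5 statements merged into one kernel-verified Lean document; each statement's English description precedes it below -/
import Mathlib

section
/- Let A be an alphabet, let K and K' be languages over A, let n ∈ ℕ, and let f be a word over A such that for every word v over A with |v| = n, v ∈ K if and only if (v ⧢ f) ∩ K' ≠ ∅. Then for every tuple (w₁, …, wₘ) of words over A whose total length Σᵢ |wᵢ| equals n, we have ⧢(w₁, …, wₘ) ∩ K ≠ ∅ if and only if ⧢(w₁, …, wₘ, f) ∩ K' ≠ ∅. -/
namespace CTS

/-- Shuffle of two words: `ε ⧢ v = {v}`, `u ⧢ ε = {u}`,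
`(x·u) ⧢ (y·v) = x·(u ⧢ y·v) ∪ y·(x·u ⧢ v)`. -/
def shuffle {α : Type*} : List α → List α → Set (List α)
  | [], v => {v}
  | u, [] => {u}
  | x :: u, y :: v =>
      (List.cons x) '' shuffle u (y :: v) ∪ (List.cons y) '' shuffle (x :: u) v
  termination_by u v => u.length + v.length

/-- Shuffle of a tuple of words: `⧢() = {ε}` and
`⧢(w₁, …, wₘ₊₁) = ⋃_{v ∈ ⧢(w₁, …, wₘ)} v ⧢ wₘ₊₁`. -/
def Shuffles {α : Type*} (ws : List (List α)) : Set (List α) :=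
  ws.foldl (fun S w => ⋃ v ∈ S, shuffle v w) {[]}

/-- `wpow u n` is the `n`-fold concatenation `u^n` of the word `u`. -/
def wpow {α : Type*} (u : List α) : ℕ → List α
  | 0 => []
  | n + 1 => u ++ wpow u n

/-- `star u = {u^n : n ∈ ℕ}`. -/
def star {α : Type*} (u : List α) : Set (List α) := {w | ∃ n, w = wpow u n}

/-- Words that are (possibly empty) concatenations of blocks from `S`. -/
def ConcatsOf {α : Type*} (S : Set (List α)) : Set (List α) :=
  {w | ∃ L : List (List α), (∀ u ∈ L, u ∈ S) ∧ w = L.flatten}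

lemma shuffle_length {α : Type*} : ∀ (u v w : List α), w ∈ shuffle u v →
    w.length = u.length + v.length
  | [], v, w, h => by simp [shuffle] at h; simp [h]
  | x :: u, [], w, h => by simp [shuffle] at h; simp [h]
  | x :: u, y :: v, w, h => by
    rw [shuffle] at h
    rcases h with ⟨w', hw', rfl⟩ | ⟨w', hw', rfl⟩
    · have := shuffle_length u (y :: v) w' hw'
      simp [this]; omega
    · have := shuffle_length (x :: u) v w' hw'
      simp [this]; omega
  termination_by u v => u.length + v.length

lemma foldl_length {α : Type*} : ∀ (ws : List (List α)) (S : Set (List α)) (L : ℕ),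
    (∀ v ∈ S, v.length = L) →
    ∀ w ∈ ws.foldl (fun S w => ⋃ v ∈ S, shuffle v w) S,
      w.length = L + (ws.map List.length).sum
  | [], S, L, hS, w, hw => by simpa using hS w hw
  | u :: ws, S, L, hS, w, hw => by
    have h := foldl_length ws (⋃ v ∈ S, shuffle v u) (L + u.length) ?_ w hw
    · simp at h ⊢; omega
    · intro v hv
      simp only [Set.mem_iUnion] at hv
      obtain ⟨v', hv', hmem⟩ := hv
      rw [shuffle_length v' u v hmem, hS v' hv']

lemma mem_Shuffles_length {α : Type*} (ws : List (List α)) (w : List α)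
    (h : w ∈ Shuffles ws) : w.length = (ws.map List.length).sum := by
  have := foldl_length ws {[]} 0 (by simp) w h
  simpa using this

/-- if `f` is a filter word for `K` and `K'` at length `n`, then for every
tuple of words of total length `n`, the tuple has a shuffle in `K` iff the tuple extended
by `f` has a shuffle in `K'`. -/
theorem stmt0 {α : Type*} (K K' : Set (List α)) (n : ℕ) (f : List α)
    (hf : ∀ v : List α, v.length = n → (v ∈ K ↔ (shuffle v f ∩ K').Nonempty)) :
    ∀ ws : List (List α), (ws.map List.length).sum = n →
      ((Shuffles ws ∩ K).Nonempty ↔ (Shuffles (ws ++ [f]) ∩ K').Nonempty) := by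
  intro ws hn
  have hsplit : Shuffles (ws ++ [f]) = ⋃ v ∈ Shuffles ws, shuffle v f := by
    simp [Shuffles, List.foldl_append]
  constructor
  · rintro ⟨v, hvS, hvK⟩
    have hlen : v.length = n := by rw [mem_Shuffles_length ws v hvS, hn]
    obtain ⟨w, hw, hwK'⟩ := (hf v hlen).mp hvK
    exact ⟨w, by rw [hsplit]; exact Set.mem_iUnion₂.mpr ⟨v, hvS, hw⟩, hwK'⟩
  · rintro ⟨w, hwS, hwK'⟩
    rw [hsplit] at hwS
    obtain ⟨v, hvS, hw⟩ := Set.mem_iUnion₂.mp hwS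
    have hlen : v.length = n := by rw [mem_Shuffles_length ws v hvS, hn]
    exact ⟨v, hvS, (hf v hlen).mpr ⟨w, hw, hwK'⟩⟩

end CTS
end

section
/- Let A be an alphabet, let u be a word over A, and let w = u^k for some k ∈ ℕ. Then every factor z of w (i.e., every word z such that w = p·z·s for some words p, s) with |z| = |u| satisfies |z|_c = |u|_c for every letter c ∈ A. -/
namespace CTS

lemma wpow_length {α : Type*} (u : List α) (k : ℕ) : (wpow u k).length = k * u.length := by
  induction k with
  | zero => simp [wpow]
  | succ n ih => simp [wpow, ih]; ring

lemma take_wpow {α : Type*} (u : List α) (k n : ℕ) (hn : n ≤ u.length) (hk : 0 < k) :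
    (wpow u k).take n = u.take n := by
  obtain ⟨k, rfl⟩ := Nat.exists_eq_succ_of_ne_zero hk.ne'
  show ((u ++ wpow u k).take n) = u.take n
  rw [List.take_append, Nat.sub_eq_zero_of_le hn, List.take_zero,
    List.append_nil]

lemma count_aux {α : Type*} [DecidableEq α] (u : List α) (hu : u ≠ []) :
    ∀ k n, n + u.length ≤ (wpow u k).length →
      ∀ c : α, (((wpow u k).drop n).take u.length).count c = u.count c := by
  intro k
  induction k with
  | zero =>
    intro n h c
    simp [wpow] at h
    exact absurd h.2 hu
  | succ k ih =>
    intro n h c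
    rcases le_or_gt u.length n with hle | hlt
    · obtain ⟨m, rfl⟩ := Nat.exists_eq_add_of_le hle
      show ((((u ++ wpow u k).drop (u.length + m))).take u.length).count c = _
      rw [List.drop_length_add_append]
      apply ih
      rw [wpow_length] at h ⊢
      rw [Nat.succ_mul] at h
      omega
    · show ((((u ++ wpow u k).drop n)).take u.length).count c = _
      rw [List.drop_append, Nat.sub_eq_zero_of_le hlt.le, List.drop_zero,
        List.take_append]
      have hlen : (u.drop n).length = u.length - n := by simp
      rw [hlen]
      have hn' : u.length - (u.length - n) = n := by omega
      rw [hn']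
      rcases Nat.eq_zero_or_pos n with rfl | hn
      · simp
      · have hk : 0 < k := by
          rcases Nat.eq_zero_or_pos k with rfl | h'
          · exfalso; rw [wpow_length] at h; simp at h; omega
          · exact h'
        rw [take_wpow u k n hlt.le hk, List.count_append,
          List.take_of_length_le (by simp)]
        conv_rhs => rw [← List.take_append_drop n u, List.count_append]
        omega


/-- every factor of `u^k` of length `|u|` has the same number of occurrences
of every letter as `u` does. -/
theorem stmt5 {α : Type*} [DecidableEq α] (u : List α) (k : ℕ) (w : List α)
    (hw : w = wpow u k) :
    ∀ p z s : List α, w = p ++ z ++ s → z.length = u.length →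
      ∀ c : α, z.count c = u.count c := by
  intro p z s hsplit hlen c
  rcases List.eq_nil_or_concat u with rfl | _
  · rw [List.length_nil] at hlen
    rw [List.eq_nil_of_length_eq_zero hlen]
  have hu : u ≠ [] := by rintro rfl; simp_all
  have hz : z = ((wpow u k).drop p.length).take u.length := by
    rw [← hw, hsplit, List.append_assoc, List.drop_left, ← hlen, List.take_left]
  rw [hz]
  apply count_aux u hu
  have : (p ++ z ++ s).length = (wpow u k).length := by rw [← hsplit, hw]
  simp at this
  omega

end CTS
end

section
/- Let A be an alphabet, n ∈ ℕ, let A₁, …, A_{n+2} be subsets of A, and let a₁, …, a_{n+1} be pairwise distinct letters of A with aᵢ ∉ Aⱼ for all i, j. Let K be the monomial A₁^* a₁ A₂^* a₂ ⋯ a_{n+1} A_{n+2}^* and K' the monomial A₁^* a₁ A₂^* ⋯ a_n A_{n+1}^*. Let (V, ≤, ℓ) be a finite A-labeled DAG such that for each 1 ≤ i ≤ n+1 there is exactly one vertex vᵢ with ℓ(vᵢ) = aᵢ. Let V' = {u ∈ V : u ≤ vᵢ for some 1 ≤ i ≤ n} ∪ {u ∈ V : u < v_{n+1}} ∪ {u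 ∈ V : u ≤ w for some w ∈ V incomparable to v_{n+1} with ℓ(w) ∉ A_{n+2}}, with the induced order and labeling. Then V has a topological sort achieving a word of K if and only if both: every z ∈ V with v_{n+1} < z satisfies ℓ(z) ∈ A_{n+2}, and V' has a topological sort achieving a word of K'. -/
namespace CTS

/-- A topological sort of the finite partial order `V`: a duplicate-free list containing
every element, such that whenever `u < v`, `u` occurs before `v`. -/
def IsTopSort {V : Type*} [PartialOrder V] (σ : List V) : Prop :=
  σ.Nodup ∧ (∀ v : V, v ∈ σ) ∧ σ.Pairwise (fun u v => ¬ v < u)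

/-- The monomial language `A₁^* a₁ A₂^* a₂ ⋯ aₘ A_{m+1}^*`, given by the list of
subalphabets and the list of pivot letters. -/
def monomialLang {α : Type*} : List (Set α) → List α → Set (List α)
  | [A0], [] => {w | ∀ c ∈ w, c ∈ A0}
  | A0 :: As, c :: cs =>
      {w | ∃ p r, (∀ d ∈ p, d ∈ A0) ∧ r ∈ monomialLang As cs ∧ w = p ++ c :: r}
  | _, _ => ∅

/-! ### Auxiliary lemmas -/

theorem mem_monomial_single {α : Type*} (B : Set α) (w : List α) :
    w ∈ monomialLang [B] [] ↔ ∀ c ∈ w, c ∈ B := Iff.rfl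

theorem mem_monomial_cons {α : Type*} (B : Set α) (L : List (Set α)) (c : α) (cs : List α)
    (w : List α) :
    w ∈ monomialLang (B :: L) (c :: cs) ↔
      ∃ p r, (∀ d ∈ p, d ∈ B) ∧ r ∈ monomialLang L cs ∧ w = p ++ c :: r := by
  rw [monomialLang]; exact Iff.rfl

theorem monomial_empty_nil {α : Type*} (cs : List α) :
    monomialLang ([] : List (Set α)) cs = ∅ := by
  cases cs <;> rfl

theorem monomial_empty_two {α : Type*} (B B' : Set α) (L : List (Set α)) :
    monomialLang (B :: B' :: L) [] = ∅ := rfl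

theorem monomial_mem_letters {α : Type*} :
    ∀ (cs : List α) (L : List (Set α)) (w : List α), w ∈ monomialLang L cs →
      ∀ d ∈ w, d ∈ cs ∨ ∃ B ∈ L, d ∈ B := by
  intro cs
  induction cs with
  | nil =>
    intro L w hw d hd
    match L with
    | [] => rw [monomial_empty_nil] at hw; exact absurd hw (Set.notMem_empty w)
    | [B] => exact Or.inr ⟨B, by simp, (mem_monomial_single B w).mp hw d hd⟩
    | B :: B' :: L' => rw [monomial_empty_two] at hw; exact absurd hw (Set.notMem_empty w)
  | cons c cs ih =>
    intro L w hw d hd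
    match L with
    | [] => rw [monomial_empty_nil] at hw; exact absurd hw (Set.notMem_empty w)
    | B :: L' =>
      obtain ⟨p, r, hp, hr, rfl⟩ := (mem_monomial_cons B L' c cs w).mp hw
      rcases List.mem_append.mp hd with h | h
      · exact Or.inr ⟨B, by simp, hp d h⟩
      · rcases List.mem_cons.mp h with rfl | h
        · exact Or.inl (by simp)
        · rcases ih L' r hr d h with h' | ⟨B', hB', hd'⟩
          · exact Or.inl (by simp [h'])
          · exact Or.inr ⟨B', by simp [hB'], hd'⟩

theorem monomial_sublist {α : Type*} :
    ∀ (cs : List α) (L : List (Set α)) (w w' : List α),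
      w ∈ monomialLang L cs → List.Sublist w' w →
      (∀ c ∈ cs, ∀ B ∈ L, c ∉ B) → cs.Nodup → (∀ c ∈ cs, c ∈ w') →
      w' ∈ monomialLang L cs := by
  intro cs
  induction cs with
  | nil =>
    intro L w w' hw hsub _ _ _
    match L with
    | [] => rw [monomial_empty_nil] at hw; exact absurd hw (Set.notMem_empty w)
    | [B] =>
      exact (mem_monomial_single B w').mpr fun d hd =>
        (mem_monomial_single B w).mp hw d (hsub.subset hd)
    | B :: B' :: L' => rw [monomial_empty_two] at hw; exact absurd hw (Set.notMem_empty w)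
  | cons c cs ih =>
    intro L w w' hw hsub hcB hnd hcw
    match L with
    | [] => rw [monomial_empty_nil] at hw; exact absurd hw (Set.notMem_empty w)
    | B :: L' =>
      obtain ⟨p, r, hp, hr, rfl⟩ := (mem_monomial_cons B L' c cs w).mp hw
      obtain ⟨s, t, rfl, hs, ht⟩ := List.sublist_append_iff.mp hsub
      have hcnotp : c ∉ p := fun h => hcB c (by simp) B (by simp) (hp c h)
      have hcnotr : c ∉ r := by
        intro h
        rcases monomial_mem_letters cs L' r hr c h with h' | ⟨B', hB', h'⟩
        · exact (List.nodup_cons.mp hnd).1 h'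
        · exact hcB c (by simp) B' (by simp [hB']) h'
      rcases List.sublist_cons_iff.mp ht with ht' | ⟨t', rfl, ht'⟩
      · rcases List.mem_append.mp (hcw c (by simp)) with h | h
        · exact absurd (hs.subset h) hcnotp
        · exact absurd (ht'.subset h) hcnotr
      · refine (mem_monomial_cons B L' c cs _).mpr ⟨s, t', fun d hd => hp d (hs.subset hd), ?_, rfl⟩
        refine ih L' r t' hr ht'
          (fun c' h' B' hB' => hcB c' (by simp [h']) B' (by simp [hB']))
          (List.nodup_cons.mp hnd).2 ?_
        intro c' hc'
        rcases List.mem_append.mp (hcw c' (by simp [hc'])) with h | h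
        · exact absurd (hp _ (hs.subset h)) (hcB c' (by simp [hc']) B (by simp))
        · rcases List.mem_cons.mp h with rfl | h
          · exact absurd hc' (List.nodup_cons.mp hnd).1
          · exact h

theorem monomial_snoc {α : Type*} :
    ∀ (cs : List α) (L : List (Set α)), L.length = cs.length + 1 →
      ∀ (B : Set α) (c : α) (w : List α),
      (w ∈ monomialLang (L ++ [B]) (cs ++ [c]) ↔
        ∃ p r, p ∈ monomialLang L cs ∧ (∀ d ∈ r, d ∈ B) ∧ w = p ++ c :: r) := by
  intro cs
  induction cs with
  | nil =>
    intro L hL B c w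
    match L with
    | [B₀] =>
      simp only [List.nil_append, List.cons_append]
      rw [mem_monomial_cons]
      constructor
      · rintro ⟨p, r, hp, hr, rfl⟩
        exact ⟨p, r, (mem_monomial_single B₀ p).mpr hp, (mem_monomial_single B r).mp hr, rfl⟩
      · rintro ⟨p, r, hp, hr, rfl⟩
        exact ⟨p, r, (mem_monomial_single B₀ p).mp hp, (mem_monomial_single B r).mpr hr, rfl⟩
  | cons c₀ cs ih =>
    intro L hL B c w
    match L with
    | B₀ :: L' =>
      have hL' : L'.length = cs.length + 1 := by simpa using hL
      simp only [List.cons_append]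
      rw [mem_monomial_cons]
      constructor
      · rintro ⟨p, r, hp, hr, rfl⟩
        obtain ⟨p', r', hp', hr', rfl⟩ := (ih L' hL' B c r).mp hr
        exact ⟨p ++ c₀ :: p', r',
          (mem_monomial_cons B₀ L' c₀ cs _).mpr ⟨p, p', hp, hp', rfl⟩, hr', by simp⟩
      · rintro ⟨p, r, hp, hr, rfl⟩
        obtain ⟨q, p', hq, hp', rfl⟩ := (mem_monomial_cons B₀ L' c₀ cs p).mp hp
        exact ⟨q, p' ++ c :: r, hq, (ih L' hL' B c _).mpr ⟨p', r, hp', hr, rfl⟩, by simp⟩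

theorem exists_topSort (V : Type*) [Fintype V] [PartialOrder V] :
    ∃ σ : List V, IsTopSort σ := by
  classical
  obtain ⟨s, hlin, hle⟩ := extend_partialOrder ((· ≤ ·) : V → V → Prop)
  haveI := hlin
  refine ⟨List.insertionSort s Finset.univ.toList, ?_, ?_, ?_⟩
  · exact ((List.perm_insertionSort s _).nodup_iff).mpr (Finset.nodup_toList _)
  · intro v; exact (List.perm_insertionSort s _).mem_iff.mpr (by simp)
  · refine (List.pairwise_insertionSort s _).imp ?_
    intro a b hab hba
    have h2 : s b a := hle b a hba.le
    have : a = b := antisymm hab h2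
    exact absurd hba (this ▸ lt_irrefl a)

/-- correctness of the inductive step for monomials. -/
theorem stmt8 {A V : Type*} [Fintype V] [PartialOrder V]
    (n : ℕ) (As : Fin (n + 2) → Set A) (as : Fin (n + 1) → A)
    (hdist : Function.Injective as)
    (hnotin : ∀ i j, as i ∉ As j)
    (ℓ : V → A)
    (vs : Fin (n + 1) → V)
    (hvs : ∀ i, ℓ (vs i) = as i)
    (huniq : ∀ i (v : V), ℓ v = as i → v = vs i) :
    (∃ σ : List V, IsTopSort σ ∧
        σ.map ℓ ∈ monomialLang (List.ofFn As) (List.ofFn as)) ↔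
      ((∀ z : V, vs (Fin.last n) < z → ℓ z ∈ As (Fin.last (n + 1))) ∧
        ∃ σ' : List ({u : V // u ∈
            ({u | ∃ i : Fin n, u ≤ vs i.castSucc} ∪ {u | u < vs (Fin.last n)} ∪
              {u | ∃ w : V, ¬ w ≤ vs (Fin.last n) ∧ ¬ vs (Fin.last n) ≤ w ∧
                ℓ w ∉ As (Fin.last (n + 1)) ∧ u ≤ w} : Set V)}),
          IsTopSort σ' ∧
            σ'.map (fun u => ℓ u.val) ∈
              monomialLang (List.ofFn fun i : Fin (n + 1) => As i.castSucc)
                (List.ofFn fun i : Fin n => as i.castSucc)) := by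
  classical
  set S : Set V := ({u | ∃ i : Fin n, u ≤ vs i.castSucc} ∪ {u | u < vs (Fin.last n)} ∪
      {u | ∃ w : V, ¬ w ≤ vs (Fin.last n) ∧ ¬ vs (Fin.last n) ≤ w ∧
        ℓ w ∉ As (Fin.last (n + 1)) ∧ u ≤ w} : Set V) with hSdef
  have hSmem : ∀ u : V, u ∈ S ↔ ((∃ i : Fin n, u ≤ vs i.castSucc) ∨ u < vs (Fin.last n) ∨
      (∃ w : V, ¬ w ≤ vs (Fin.last n) ∧ ¬ vs (Fin.last n) ≤ w ∧
        ℓ w ∉ As (Fin.last (n + 1)) ∧ u ≤ w)) := by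
    intro u
    simp [hSdef, Set.mem_union, Set.mem_setOf_eq, or_assoc]
  have hdown : ∀ x y : V, x ≤ y → y ∈ S → x ∈ S := by
    intro x y hxy hy
    rw [hSmem] at hy ⊢
    rcases hy with ⟨i, h⟩ | h | ⟨w, h1, h2, h3, h4⟩
    · exact Or.inl ⟨i, hxy.trans h⟩
    · exact Or.inr (Or.inl (lt_of_le_of_lt hxy h))
    · exact Or.inr (Or.inr ⟨w, h1, h2, h3, hxy.trans h4⟩)
  have hK'len : (List.ofFn fun i : Fin (n + 1) => As i.castSucc).length =
      (List.ofFn fun i : Fin n => as i.castSucc).length + 1 := by simp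
  have hofAs : List.ofFn As =
      (List.ofFn fun i : Fin (n + 1) => As i.castSucc) ++ [As (Fin.last (n + 1))] := by
    rw [List.ofFn_succ']; simp [List.concat_eq_append]
  have hofas : List.ofFn as =
      (List.ofFn fun i : Fin n => as i.castSucc) ++ [as (Fin.last n)] := by
    rw [List.ofFn_succ']; simp [List.concat_eq_append]
  have hsplit : ∀ w : List A, w ∈ monomialLang (List.ofFn As) (List.ofFn as) ↔
      ∃ p r, p ∈ monomialLang (List.ofFn fun i : Fin (n + 1) => As i.castSucc)
          (List.ofFn fun i : Fin n => as i.castSucc) ∧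
        (∀ d ∈ r, d ∈ As (Fin.last (n + 1))) ∧ w = p ++ as (Fin.last n) :: r := by
    intro w
    rw [hofAs, hofas]
    exact monomial_snoc _ _ hK'len _ _ w
  have hne_last : ∀ i : Fin n, as i.castSucc ≠ as (Fin.last n) := by
    intro i h
    exact absurd (hdist h) (Fin.castSucc_lt_last i).ne
  have hinj' : Function.Injective (fun i : Fin n => as i.castSucc) :=
    fun i j h => Fin.castSucc_injective n (hdist h)
  constructor
  · rintro ⟨σ, ⟨hnd, hall, hpw⟩, hwmem⟩
    obtain ⟨p, r, hp, hr, heq⟩ := (hsplit _).mp hwmem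
    obtain ⟨σp, σ2, rfl, hmp, hm2⟩ := List.map_eq_append_iff.mp heq
    obtain ⟨x, σr, rfl, hx, hmr⟩ := List.map_eq_cons_iff.mp hm2
    obtain rfl : x = vs (Fin.last n) := huniq _ x hx
    rw [List.pairwise_append] at hpw
    obtain ⟨hpwp, hpw2, hcross⟩ := hpw
    rw [List.pairwise_cons] at hpw2
    obtain ⟨hxr, hpwr⟩ := hpw2
    have hafter : ∀ z ∈ σr, ℓ z ∈ As (Fin.last (n + 1)) := by
      intro z hz
      exact hr _ (hmr ▸ List.mem_map_of_mem (f := ℓ) hz)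
    have hvp : ∀ i : Fin n, vs i.castSucc ∈ σp := by
      intro i
      rcases List.mem_append.mp (hall (vs i.castSucc)) with h | h
      · exact h
      · rcases List.mem_cons.mp h with h | h
        · exact absurd (congrArg ℓ h) (by rw [hvs, hvs]; exact hne_last i)
        · exact absurd (hafter _ h) (by rw [hvs]; exact hnotin _ _)
    have hvnotS : vs (Fin.last n) ∉ S := by
      rw [hSmem]
      rintro (⟨i, hle⟩ | hlt | ⟨w, h1, h2, h3, h4⟩)
      · have hne : vs (Fin.last n) ≠ vs i.castSucc := by
          intro h
          exact hne_last i (by rw [← hvs, ← h, hvs])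
        exact hcross _ (hvp i) _ (List.mem_cons_self) (lt_of_le_of_ne hle hne)
      · exact lt_irrefl _ hlt
      · exact h2 h4
    have hSp : ∀ u, u ∈ S → u ∈ σp := by
      intro u hu
      rcases List.mem_append.mp (hall u) with h | h
      · exact h
      rcases List.mem_cons.mp h with rfl | h
      · exact absurd hu hvnotS
      exfalso
      have hul : ℓ u ∈ As (Fin.last (n + 1)) := hafter u h
      rw [hSmem] at hu
      rcases hu with ⟨i, hle⟩ | hlt | ⟨w, h1, h2, h3, h4⟩
      · have hne : u ≠ vs i.castSucc := by
          intro hh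
          rw [hh, hvs] at hul
          exact hnotin _ _ hul
        exact hcross _ (hvp i) u (List.mem_cons_of_mem _ h) (lt_of_le_of_ne hle hne)
      · exact hxr u h hlt
      · rcases List.mem_append.mp (hall w) with hw | hw
        · have hne : u ≠ w := fun hh => h3 (hh ▸ hul)
          exact hcross _ hw u (List.mem_cons_of_mem _ h) (lt_of_le_of_ne h4 hne)
        · rcases List.mem_cons.mp hw with rfl | hw
          · exact h2 le_rfl
          · exact h3 (hafter _ hw)
    refine ⟨?_, ?_⟩
    · intro z hz
      rcases List.mem_append.mp (hall z) with h | h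
      · exact absurd hz (hcross _ h _ (List.mem_cons_self))
      rcases List.mem_cons.mp h with rfl | h
      · exact absurd hz (lt_irrefl _)
      · exact hafter z h
    · have hndp : σp.Nodup := (List.sublist_append_left σp _).nodup hnd
      set σ0 : List V := σp.filter (fun u => decide (u ∈ S)) with hσ0
      have hmem0 : ∀ u ∈ σ0, u ∈ S := by
        intro u hu
        have := (List.mem_filter.mp hu).2
        simpa using this
      have hval : ((σ0.attach.map fun u => (⟨u.1, hmem0 u.1 u.2⟩ : {u : V // u ∈ S}))).map
          Subtype.val = σ0 := by
        simp [List.map_map]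
      refine ⟨σ0.attach.map fun u => (⟨u.1, hmem0 u.1 u.2⟩ : {u : V // u ∈ S}),
        ⟨?_, ?_, ?_⟩, ?_⟩
      · have h0nd : σ0.Nodup := hndp.filter _
        exact List.Nodup.of_map Subtype.val (by rw [hval]; exact h0nd)
      · rintro ⟨u, hu⟩
        have h0 : u ∈ σ0 := List.mem_filter.mpr ⟨hSp u hu, by simpa using hu⟩
        exact List.mem_map.mpr ⟨⟨u, h0⟩, List.mem_attach _ _, rfl⟩
      · have hpw0 : σ0.Pairwise (fun a b => ¬ b < a) := hpwp.filter _
        have h1' : (((σ0.attach.map fun u => (⟨u.1, hmem0 u.1 u.2⟩ : {u : V // u ∈ S}))).map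
            Subtype.val).Pairwise (fun a b => ¬ b < a) := by rw [hval]; exact hpw0
        have h2' := List.pairwise_map.mp h1'
        exact h2'.imp fun hab h => hab (Subtype.coe_lt_coe.mpr h)
      · have hmapeq : ((σ0.attach.map fun u =>
            (⟨u.1, hmem0 u.1 u.2⟩ : {u : V // u ∈ S})).map fun u => ℓ u.val) = σ0.map ℓ := by
          simp [List.map_map]
        rw [hmapeq]
        refine monomial_sublist _ _ (σp.map ℓ) _ (by rw [hmp]; exact hp)
          ((List.filter_sublist (l := σp)).map ℓ) ?_ (List.nodup_ofFn.mpr hinj') ?_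
        · intro c hc B hB
          rcases List.mem_ofFn.mp hc with ⟨i, rfl⟩
          rcases List.mem_ofFn.mp hB with ⟨j, rfl⟩
          exact hnotin _ _
        · intro c hc
          rcases List.mem_ofFn.mp hc with ⟨i, rfl⟩
          refine List.mem_map.mpr ⟨vs i.castSucc, List.mem_filter.mpr ⟨hvp i, ?_⟩, hvs _⟩
          simp only [decide_eq_true_eq]
          exact (hSmem _).mpr (Or.inl ⟨i, le_rfl⟩)
  · rintro ⟨h1, σ', ⟨hnd', hall', hpw'⟩, hw'⟩
    have hvnotS : vs (Fin.last n) ∉ S := by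
      intro h
      have hm : as (Fin.last n) ∈ σ'.map (fun u => ℓ u.val) :=
        List.mem_map.mpr ⟨⟨_, h⟩, hall' _, hvs _⟩
      rcases monomial_mem_letters _ _ _ hw' _ hm with hc | ⟨B, hB, hcB⟩
      · rcases List.mem_ofFn.mp hc with ⟨i, hi⟩
        exact hne_last i hi
      · rcases List.mem_ofFn.mp hB with ⟨j, rfl⟩
        exact hnotin _ _ hcB
    haveI : Fintype {u : V // u ∉ S ∧ u ≠ vs (Fin.last n)} := Fintype.ofFinite _
    obtain ⟨τ, hτnd, hτall, hτpw⟩ := exists_topSort {u : V // u ∉ S ∧ u ≠ vs (Fin.last n)}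
    refine ⟨σ'.map Subtype.val ++ vs (Fin.last n) :: τ.map Subtype.val, ⟨?_, ?_, ?_⟩, ?_⟩
    · rw [List.nodup_append]
      refine ⟨hnd'.map Subtype.val_injective, ?_, ?_⟩
      · rw [List.nodup_cons]
        constructor
        · intro h
          rcases List.mem_map.mp h with ⟨u, _, hu⟩
          exact u.2.2 hu
        · exact hτnd.map Subtype.val_injective
      · rintro a ha b hb rfl
        rcases List.mem_map.mp ha with ⟨u, _, rfl⟩
        rcases List.mem_cons.mp hb with h | h
        · exact hvnotS (h ▸ u.2)
        · rcases List.mem_map.mp h with ⟨z, _, hz⟩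
          exact z.2.1 (by rw [hz]; exact u.2)
    · intro u
      by_cases hu : u ∈ S
      · exact List.mem_append.mpr (Or.inl (List.mem_map.mpr ⟨⟨u, hu⟩, hall' _, rfl⟩))
      · by_cases hv : u = vs (Fin.last n)
        · refine List.mem_append.mpr (Or.inr ?_)
          rw [hv]
          exact List.mem_cons_self
        · exact List.mem_append.mpr (Or.inr (List.mem_cons_of_mem _
            (List.mem_map.mpr ⟨⟨u, hu, hv⟩, hτall _, rfl⟩)))
    · rw [List.pairwise_append]
      refine ⟨?_, ?_, ?_⟩
      · exact List.pairwise_map.mpr (hpw'.imp fun hab h => hab (Subtype.coe_lt_coe.mp h))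
      · rw [List.pairwise_cons]
        constructor
        · intro b hb hlt
          rcases List.mem_map.mp hb with ⟨z, _, rfl⟩
          exact z.2.1 ((hSmem _).mpr (Or.inr (Or.inl hlt)))
        · exact List.pairwise_map.mpr (hτpw.imp fun hab h => hab (Subtype.coe_lt_coe.mp h))
      · intro a ha b hb hlt
        rcases List.mem_map.mp ha with ⟨u, _, rfl⟩
        have hbS : b ∈ S := hdown b u.val hlt.le u.2
        rcases List.mem_cons.mp hb with rfl | h
        · exact hvnotS hbS
        · rcases List.mem_map.mp h with ⟨z, _, rfl⟩
          exact z.2.1 hbS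
    · rw [List.map_append, hsplit]
      refine ⟨σ'.map fun u => ℓ u.val, (τ.map Subtype.val).map ℓ, hw', ?_, ?_⟩
      · intro d hd
        rcases List.mem_map.mp hd with ⟨u, hu, rfl⟩
        rcases List.mem_map.mp hu with ⟨z, _, rfl⟩
        obtain ⟨hzS, hzv⟩ := z.2
        by_cases hle : vs (Fin.last n) ≤ z.val
        · rcases hle.lt_or_eq with h | h
          · exact h1 _ h
          · exact absurd h.symm hzv
        · by_cases hle2 : z.val ≤ vs (Fin.last n)
          · exact absurd ((hSmem _).mpr (Or.inr (Or.inl (lt_of_le_of_ne hle2 hzv)))) hzS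
          · by_contra hnot
            exact hzS ((hSmem _).mpr (Or.inr (Or.inr ⟨z.val, hle2, hle, hnot, le_rfl⟩)))
      · simp [List.map_map, hvs]


end CTS
end

section
/- Let N be a finite commutative monoid and ω ≥ 1 an integer such that p^{2ω} = p^ω for every p ∈ N. Call an element p ∈ N fully recurrent if there exist elements s₁, …, s_k that generate N as a monoid and integers r₁, …, r_k ≥ ω such that p = s₁^{r₁} ⋯ s_k^{r_k}. Let H be a finite group and let τ be a relational morphism from N to H, i.e., a map τ : N → 𝒫(H) such that τ(m) is nonempty for every m ∈ N and τ(m)·τ(m') ⊆ τ(m·m') for all m, m' ∈ N, where S·S' = {g·g' : g ∈ S, g' ∈ S'}. Then for all fully recurrent elements p, q of N, the sets τ(p) and τ(q) have the same cardinality. -/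
open scoped Pointwise

namespace CTS

/-- An element `p` of a commutative monoid is fully recurrent (with respect to the
idempotent power `ω`) if it can be written as `s₁^{r₁} ⋯ s_k^{r_k}` where the `sᵢ`
generate the monoid and all exponents satisfy `rᵢ ≥ ω`. -/
def FullyRecurrent {N : Type*} [CommMonoid N] (ω : ℕ) (p : N) : Prop :=
  ∃ (k : ℕ) (s : Fin k → N) (r : Fin k → ℕ),
    Submonoid.closure (Set.range s) = ⊤ ∧ (∀ i, ω ≤ r i) ∧ p = ∏ i, s i ^ r i

private lemma pow_add_omega {N : Type*} [CommMonoid N] {ω : ℕ}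
    (hidem : ∀ p : N, p ^ (2 * ω) = p ^ ω) {s : N} {r : ℕ} (hr : ω ≤ r) :
    s ^ (r + ω) = s ^ r := by
  obtain ⟨c, rfl⟩ := Nat.exists_eq_add_of_le hr
  have h1 : ω + c + ω = 2 * ω + c := by omega
  rw [h1, pow_add, hidem, ← pow_add]

private lemma absorb {N : Type*} [CommMonoid N] {ω : ℕ}
    (hidem : ∀ p : N, p ^ (2 * ω) = p ^ ω) {p : N}
    (hp : FullyRecurrent ω p) (m : N) : p * m ^ ω = p := by
  obtain ⟨k, s, r, hclos, hr, rfl⟩ := hp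
  have hm : m ∈ Submonoid.closure (Set.range s) := by rw [hclos]; trivial
  induction hm using Submonoid.closure_induction with
  | mem x hx =>
      obtain ⟨i, rfl⟩ := hx
      rw [← Finset.prod_erase_mul _ _ (Finset.mem_univ i), mul_assoc, ← pow_add,
        pow_add_omega hidem (hr i), Finset.prod_erase_mul _ _ (Finset.mem_univ i)]
  | one => simp
  | mul x y _ _ hx hy => rw [mul_pow, ← mul_assoc, hx, hy]

private lemma card_le {H : Type*} [Group H] [Fintype H] {N : Type*} [CommMonoid N]
    (τ : N → Set H) (hne : ∀ m : N, (τ m).Nonempty)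
    (hmul : ∀ m m' : N, τ m * τ m' ⊆ τ (m * m')) (m m' : N) :
    (τ m).ncard ≤ (τ (m * m')).ncard := by
  obtain ⟨g, hg⟩ := hne m'
  have hsub : τ m * {g} ⊆ τ (m * m') := fun x hx =>
    hmul m m' (Set.mul_subset_mul_left (Set.singleton_subset_iff.2 hg) hx)
  have : (τ m * {g}).ncard = (τ m).ncard := by
    rw [Set.mul_singleton, Set.ncard_image_of_injective _ (mul_left_injective g)]
  rw [← this]
  exact Set.ncard_le_ncard hsub (Set.toFinite _)

/-- for any relational morphism `τ` from a finite commutative monoid `N`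
to a finite group `H`, the images of any two fully recurrent elements of `N` have the
same cardinality. -/
theorem stmt17 {N H : Type*} [CommMonoid N] [Fintype N] [Group H] [Fintype H]
    (ω : ℕ) (hω : 1 ≤ ω) (hidem : ∀ p : N, p ^ (2 * ω) = p ^ ω)
    (τ : N → Set H)
    (hne : ∀ m : N, (τ m).Nonempty)
    (hmul : ∀ m m' : N, τ m * τ m' ⊆ τ (m * m'))
    (p q : N) (hp : FullyRecurrent ω p) (hq : FullyRecurrent ω q) :
    (τ p).ncard = (τ q).ncard := by
  have hpω : ∀ m : N, p * m ^ ω = p := absorb hidem hp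
  have hqω : ∀ m : N, q * m ^ ω = q := absorb hidem hq
  have hpow : ∀ x : N, x * x ^ (ω - 1) = x ^ ω := by
    intro x
    nth_rewrite 1 [← pow_one x]
    rw [← pow_add]
    congr 1
    omega
  have h1 : p * (q * p ^ (ω - 1)) = q := by
    calc p * (q * p ^ (ω - 1)) = q * (p * p ^ (ω - 1)) := mul_left_comm _ _ _
    _ = q * p ^ ω := by rw [hpow]
    _ = q := hqω p
  have h2 : q * (p * q ^ (ω - 1)) = p := by
    calc q * (p * q ^ (ω - 1)) = p * (q * q ^ (ω - 1)) := mul_left_comm _ _ _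
    _ = p * q ^ ω := by rw [hpow]
    _ = p := hpω q
  have le1 := card_le τ hne hmul p (q * p ^ (ω - 1))
  have le2 := card_le τ hne hmul q (p * q ^ (ω - 1))
  rw [h1] at le1
  rw [h2] at le2
  omega

end CTS
end

section
/- Let A be an alphabet, H a finite group, and μ : A^* → H a surjective monoid morphism. Then there exists a constant B ∈ ℕ such that for every n ∈ ℕ, every n-tuple of words w₁, …, wₙ over A, and every (n+1)-tuple of words w'₀, …, w'ₙ over A, setting u = w'₀ w₁ w'₁ w₂ w'₂ ⋯ wₙ w'ₙ, there exists a set J ⊆ {0, …, n} of cardinality at most B such that, defining w''ⱼ = w'ⱼ if j ∈ J and w''ⱼ = ε otherwise, and v = w''₀ w₁ w''₁ ⋯ wₙ w''ₙ, we have μ(u) = μ(v) and μ(w'₀ w'₁ ⋯ w'ₙ) = μ(w''₀ w''₁ ⋯ w''ₙ). -/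
namespace CTS

section Aux

variable {H : Type*} [Group H]

/-- interleaved prefix product -/
def XX (a b : ℕ → H) : ℕ → H
  | 0 => b 0
  | n+1 => XX a b n * a n * b (n+1)

/-- insertion prefix product -/
def YY (b : ℕ → H) : ℕ → H
  | 0 => b 0
  | n+1 => YY b n * b (n+1)

/-- prefix product of the `a`'s -/
def CC (a : ℕ → H) : ℕ → H
  | 0 => 1
  | n+1 => CC a n * a n

lemma agree_le (a b b' : ℕ → H) (j : ℕ) (h : ∀ l ≤ j, b' l = b l) :
    XX a b' j = XX a b j ∧ YY b' j = YY b j := by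
  induction j with
  | zero => simp [XX, YY, h 0 le_rfl]
  | succ n ih =>
    obtain ⟨hx, hy⟩ := ih (fun l hl => h l (hl.trans (Nat.le_succ n)))
    simp [XX, YY, hx, hy, h (n+1) le_rfl]

lemma agree_ge (a b b' : ℕ → H) (k : ℕ) (hx : XX a b' k = XX a b k) (hy : YY b' k = YY b k)
    (h : ∀ l, k < l → b' l = b l) :
    ∀ d, XX a b' (k+d) = XX a b (k+d) ∧ YY b' (k+d) = YY b (k+d) := by
  intro d; induction d with
  | zero => exact ⟨hx, hy⟩
  | succ d ih =>
    obtain ⟨hx', hy'⟩ := ih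
    have hb := h (k+d+1) (by omega)
    constructor
    · show XX a b' ((k+d)+1) = XX a b ((k+d)+1)
      rw [XX, XX, hx', hb]
    · show YY b' ((k+d)+1) = YY b ((k+d)+1)
      rw [YY, YY, hy', hb]

lemma mid_block (a b b' : ℕ → H) (j k : ℕ)
    (hx : XX a b' j = XX a b j) (hy : YY b' j = YY b j)
    (h1 : ∀ l, j < l → l ≤ k → b' l = 1) :
    ∀ d, j + d ≤ k → XX a b' (j+d) = XX a b j * (CC a j)⁻¹ * CC a (j+d) ∧ YY b' (j+d) = YY b j := by
  intro d; induction d with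
  | zero => intro _; simp [hx, hy]
  | succ d ih =>
    intro hd
    obtain ⟨hx', hy'⟩ := ih (by omega)
    have h2 : b' (j+d+1) = 1 := h1 _ (by omega) (by omega)
    constructor
    · show XX a b' ((j+d)+1) = XX a b j * (CC a j)⁻¹ * CC a ((j+d)+1)
      rw [XX, CC, hx', h2, mul_one, mul_assoc]
    · show YY b' ((j+d)+1) = YY b j
      rw [YY, hy', h2, mul_one]

lemma block_remove (a b b' : ℕ → H) (j k N : ℕ) (hjk : j < k) (hkN : k ≤ N)
    (hagree₁ : ∀ l, l ≤ j → b' l = b l)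
    (hmid : ∀ l, j < l → l ≤ k → b' l = 1)
    (hagree₂ : ∀ l, k < l → b' l = b l)
    (hZ : XX a b j * (CC a j)⁻¹ = XX a b k * (CC a k)⁻¹)
    (hY : YY b j = YY b k) :
    XX a b' N = XX a b N ∧ YY b' N = YY b N := by
  obtain ⟨hx0, hy0⟩ := agree_le a b b' j hagree₁
  obtain ⟨hxk, hyk⟩ := mid_block a b b' j k hx0 hy0 hmid (k - j) (by omega)
  rw [show j + (k-j) = k from by omega] at hxk hyk
  have hxk' : XX a b' k = XX a b k := by
    rw [hxk, hZ]; group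
  have hyk' : YY b' k = YY b k := by rw [hyk, hY]
  have := agree_ge a b b' k hxk' hyk' hagree₂ (N - k)
  rwa [show k + (N-k) = N from by omega] at this

/-- mask a function by a finite set of indices -/
def mask (S : Finset ℕ) (b : ℕ → H) : ℕ → H := fun l => if l ∈ S then b l else 1

lemma select [Fintype H] (a b : ℕ → H) (N : ℕ) :
    ∀ S : Finset ℕ, (∀ s ∈ S, s ≤ N) →
      ∃ J ⊆ S, J.card ≤ Fintype.card H ^ 2 ∧
        XX a (mask J b) N = XX a (mask S b) N ∧ YY (mask J b) N = YY (mask S b) N := by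
  intro S
  induction S using Finset.strongInduction with
  | _ S ih =>
    intro hS
    by_cases hcard : S.card ≤ Fintype.card H ^ 2
    · exact ⟨S, le_rfl, hcard, rfl, rfl⟩
    · have hlt : (Finset.univ : Finset (H × H)).card < S.card := by
        simp only [Finset.card_univ, Fintype.card_prod]
        nlinarith [sq (Fintype.card H)]
      obtain ⟨j, hj, k, hk, hne, heq⟩ :=
        Finset.exists_ne_map_eq_of_card_lt_of_maps_to hlt
          (f := fun l => (XX a (mask S b) l * (CC a l)⁻¹, YY (mask S b) l))
          (fun x _ => Finset.mem_univ _)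
      wlog hjk : j < k generalizing j k
      · exact this k hk j hj hne.symm heq.symm (by omega)
      set S' := S.filter (fun l => l ≤ j ∨ k < l) with hS'def
      have hsub : S' ⊆ S := Finset.filter_subset _ _
      have hss : S' ⊂ S := by
        refine (Finset.ssubset_iff_of_subset hsub).mpr ⟨k, hk, ?_⟩
        simp only [hS'def, Finset.mem_filter]
        omega
      have hb' : XX a (mask S' b) N = XX a (mask S b) N ∧
          YY (mask S' b) N = YY (mask S b) N := by
        apply block_remove a (mask S b) (mask S' b) j k N hjk (hS k hk)
        · intro l hl
          simp only [mask, hS'def, Finset.mem_filter]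
          by_cases h : l ∈ S <;> simp [h, hl]
        · intro l h1 h2
          simp only [mask, hS'def, Finset.mem_filter]
          rw [if_neg]; omega
        · intro l hl
          simp only [mask, hS'def, Finset.mem_filter]
          by_cases h : l ∈ S <;> simp [h]; omega
        · exact congrArg Prod.fst heq
        · exact congrArg Prod.snd heq
      obtain ⟨J, hJsub, hJcard, hX, hY⟩ := ih S' hss (fun s hs => hS s (hsub hs))
      exact ⟨J, hJsub.trans hsub, hJcard, hX.trans hb'.1, hY.trans hb'.2⟩

lemma ofFn_XX (a b : ℕ → H) (n : ℕ) :
    b 0 * (List.ofFn fun i : Fin n => a i * b (i+1)).prod = XX a b n := by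
  induction n with
  | zero => simp [XX]
  | succ n ih =>
    rw [List.ofFn_succ']
    simp only [List.concat_eq_append, List.prod_append, List.prod_cons, List.prod_nil,
      Fin.coe_castSucc, Fin.val_last, mul_one]
    rw [← mul_assoc, ih]
    simp [XX, mul_assoc]

lemma ofFn_YY (b : ℕ → H) (n : ℕ) :
    (List.ofFn fun j : Fin (n+1) => b j).prod = YY b n := by
  induction n with
  | zero => simp [YY]
  | succ n ih =>
    rw [List.ofFn_succ']
    simp only [List.concat_eq_append, List.prod_append, List.prod_cons, List.prod_nil,
      Fin.coe_castSucc, Fin.val_last, mul_one]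
    rw [ih]
    simp [YY]

end Aux

lemma mu_flatten {α H : Type*} [Group H] (μ : List α → H) (hone : μ [] = 1)
    (hmul : ∀ u v : List α, μ (u ++ v) = μ u * μ v) :
    ∀ L : List (List α), μ L.flatten = (L.map μ).prod := by
  intro L; induction L with
  | nil => simpa using hone
  | cons h t ih => simp [List.flatten_cons, hmul, ih]

/-- insertion lemma: for a surjective morphism `μ : A^* → H` onto a finite
group, there is a constant `B` such that, given words `w₁, …, wₙ` and insertions
`w'₀, …, w'ₙ`, one can keep at most `B` of the insertions (emptying the others) without
changing the `μ`-image of the full interleaving nor that of the concatenated insertions. -/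
theorem stmt18 {α H : Type*} [Group H] [Fintype H]
    (μ : List α → H) (hone : μ [] = 1)
    (hmul : ∀ u v : List α, μ (u ++ v) = μ u * μ v)
    (hsurj : Function.Surjective μ) :
    ∃ B : ℕ, ∀ (n : ℕ) (w : Fin n → List α) (w' : Fin (n + 1) → List α),
      ∃ J : Finset (Fin (n + 1)), J.card ≤ B ∧
        ∀ w'' : Fin (n + 1) → List α,
          (∀ j, w'' j = if j ∈ J then w' j else []) →
          μ (w' 0 ++ (List.ofFn fun i : Fin n => w i ++ w' i.succ).flatten) =
              μ (w'' 0 ++ (List.ofFn fun i : Fin n => w i ++ w'' i.succ).flatten) ∧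
            μ (List.ofFn w').flatten = μ (List.ofFn w'').flatten := by
  refine ⟨Fintype.card H ^ 2, fun n w w' => ?_⟩
  set a : ℕ → H := fun l => if h : l < n then μ (w ⟨l, h⟩) else 1 with ha
  set b : ℕ → H := fun l => if h : l < n + 1 then μ (w' ⟨l, h⟩) else 1 with hb
  have hmaskS : mask (Finset.range (n+1)) b = b := by
    funext l
    simp only [mask, Finset.mem_range, hb]
    split_ifs with h1 h2 h2 <;> first | rfl | omega
  obtain ⟨J0, hJ0sub, hJ0card, hXe, hYe⟩ :=
    select a b n (Finset.range (n+1)) (fun s hs => Nat.lt_succ_iff.mp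
      (Finset.mem_range.mp hs))
  rw [hmaskS] at hXe hYe
  refine ⟨J0.attachFin (fun m hm => Finset.mem_range.mp (hJ0sub hm)), ?_, ?_⟩
  · rw [Finset.card_attachFin]; exact hJ0card
  intro w'' hw''
  have hmu'' : ∀ j : Fin (n+1), μ (w'' j) = mask J0 b (j : ℕ) := by
    intro j
    rw [hw'' j]
    simp only [Finset.mem_attachFin, mask, hb, j.isLt, dif_pos]
    split_ifs with h <;> simp [hone, Fin.eta]
  have hmu' : ∀ j : Fin (n+1), μ (w' j) = b (j : ℕ) := by
    intro j; simp [hb, j.isLt, Fin.eta]; intro h; exact absurd h (Nat.not_lt.mpr (Nat.lt_succ_iff.mp j.isLt))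
  constructor
  · rw [hmul, hmul, mu_flatten μ hone hmul, mu_flatten μ hone hmul,
      List.map_ofFn, List.map_ofFn]
    have e1 : (List.ofFn (μ ∘ fun i : Fin n => w i ++ w' i.succ)).prod
        = (List.ofFn fun i : Fin n => a i * b (i+1)).prod := by
      have hf : (μ ∘ fun i : Fin n => w i ++ w' i.succ)
          = fun i : Fin n => a i * b ((i : ℕ)+1) := by
        funext i
        simp only [Function.comp_apply, hmul]
        rw [hmu' i.succ, Fin.val_succ]
        congr 1
        simp [ha, i.isLt]
      rw [hf]
    have e2 : (List.ofFn (μ ∘ fun i : Fin n => w i ++ w'' i.succ)).prod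
        = (List.ofFn fun i : Fin n => a i * mask J0 b (i+1)).prod := by
      have hf : (μ ∘ fun i : Fin n => w i ++ w'' i.succ)
          = fun i : Fin n => a i * mask J0 b ((i : ℕ)+1) := by
        funext i
        simp only [Function.comp_apply, hmul]
        rw [hmu'' i.succ, Fin.val_succ]
        congr 1
        simp [ha, i.isLt]
      rw [hf]
    rw [e1, e2, hmu' 0, hmu'' 0]
    show b 0 * _ = mask J0 b ((0 : Fin (n+1)) : ℕ) * _
    rw [ofFn_XX a b n]
    have : ((0 : Fin (n+1)) : ℕ) = 0 := rfl
    rw [this]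
    have e3 : (mask J0 b 0) * (List.ofFn fun i : Fin n => a i * mask J0 b (i+1)).prod
        = XX a (mask J0 b) n := ofFn_XX a (mask J0 b) n
    rw [e3]
    exact hXe.symm
  · rw [mu_flatten μ hone hmul, mu_flatten μ hone hmul, List.map_ofFn, List.map_ofFn]
    have e1 : (List.ofFn (μ ∘ w')).prod = (List.ofFn fun j : Fin (n+1) => b (j : ℕ)).prod := by
      rw [show μ ∘ w' = fun j : Fin (n+1) => b (j : ℕ) from funext fun j => hmu' j]
    have e2 : (List.ofFn (μ ∘ w'')).prod
        = (List.ofFn fun j : Fin (n+1) => mask J0 b (j : ℕ)).prod := by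
      rw [show μ ∘ w'' = fun j : Fin (n+1) => mask J0 b (j : ℕ) from funext fun j => hmu'' j]
    rw [e1, e2, ofFn_YY b n, ofFn_YY (mask J0 b) n]
    exact hYe.symm

end CTS
end
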